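/- Let λ > 0, H ∈ (0,1/2), θ > 0. The covariance of the stationary fractional Ornstein–Uhlenbeck process satisfies, for t ≥ 0: θ²·H(2H-1)·e^{-λt} ∫₀^t ∫_{-∞}^0 e^{λ(τ₁+τ₂)} |τ₁-τ₂|^{2H-2} dτ₁ dτ₂ + θ² e^{-λt} Γ(2H+1)/(2λ^{2H}) = θ² cosh(λt) Γ(2H+1)/(2λ^{2H}) - H θ² ∫₀^t cosh(λ(t-u)) u^{2H-1} du. -/

import Mathlib

open MeasureTheory Real Set Filter Topology

namespace FouCovAux

noncomputable def f1 (lam p s : ℝ) : ℝ := Real.exp (-(lam * s)) * s ^ (p - 1)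

noncomputable def G (lam p τ : ℝ) : ℝ := ∫ s in Set.Ioi τ, f1 lam p s

lemma f1_contAt {lam p : ℝ} {τ : ℝ} (hτ : τ ≠ 0) : ContinuousAt (f1 lam p) τ := by
  apply ContinuousAt.mul
  · exact (Real.continuous_exp.comp (continuous_const.mul continuous_id).neg).continuousAt
  · exact Real.continuousAt_rpow_const τ _ (Or.inl hτ)

lemma f1_contOn {lam p : ℝ} : ContinuousOn (f1 lam p) (Set.Ioi 0) := fun x hx =>
  (f1_contAt (ne_of_gt hx)).continuousWithinAt

lemma f1_integrableOn_Ioi {lam p c : ℝ} (hlam : 0 < lam) (hp : p ≤ 1) (hc : 0 < c) :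
    IntegrableOn (f1 lam p) (Set.Ioi c) := by
  have hmeas : AEStronglyMeasurable (f1 lam p) (volume.restrict (Set.Ioi c)) :=
    (f1_contOn.mono (Set.Ioi_subset_Ioi hc.le)).aestronglyMeasurable measurableSet_Ioi
  refine Integrable.mono' (((exp_neg_integrableOn_Ioi c hlam)).const_mul (c ^ (p - 1))) hmeas ?_
  filter_upwards [self_mem_ae_restrict measurableSet_Ioi] with s hs
  have hs0 : (0 : ℝ) < s := hc.trans hs
  have h1 : s ^ (p - 1) ≤ c ^ (p - 1) :=
    Real.rpow_le_rpow_of_nonpos hc (le_of_lt hs) (by linarith)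
  have h2 : ‖f1 lam p s‖ = Real.exp (-(lam * s)) * s ^ (p - 1) := by
    simp only [f1, Real.norm_eq_abs]
    exact abs_of_nonneg (by positivity)
  rw [h2, neg_mul]
  calc Real.exp (-(lam * s)) * s ^ (p - 1) ≤ Real.exp (-(lam * s)) * c ^ (p - 1) := by
        exact mul_le_mul_of_nonneg_left h1 (Real.exp_nonneg _)
    _ = c ^ (p - 1) * Real.exp (-(lam * s)) := mul_comm _ _

lemma f1_integrableOn_Ioi_zero {lam p : ℝ} (hlam : 0 < lam) (hp : 0 < p) :
    IntegrableOn (f1 lam p) (Set.Ioi 0) := by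
  have h := integrableOn_rpow_mul_exp_neg_mul_rpow (s := p - 1) (p := 1) (b := lam)
    (by linarith) one_pos hlam
  refine h.congr_fun (fun x hx => ?_) measurableSet_Ioi
  simp only [Real.rpow_one, f1]
  rw [mul_comm, neg_mul]

lemma integral_Ioi_split {f : ℝ → ℝ} {a b : ℝ} (hab : a ≤ b) (hf : IntegrableOn f (Set.Ioi a)) :
    ∫ s in Set.Ioi a, f s = (∫ s in a..b, f s) + ∫ s in Set.Ioi b, f s := by
  rw [intervalIntegral.integral_of_le hab, ← Set.Ioc_union_Ioi_eq_Ioi hab,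
    setIntegral_union ?hd measurableSet_Ioi
      (hf.mono_set Set.Ioc_subset_Ioi_self) (hf.mono_set (Set.Ioi_subset_Ioi hab))]
  case hd =>
    rw [Set.disjoint_left]
    rintro x ⟨_, hx2⟩ hx3
    exact absurd hx3 (not_lt.mpr hx2)

lemma f1_intervalIntegrable {lam p a b : ℝ} (hlam : 0 < lam) (hp : p ≤ 1) (ha : 0 < a)
    (hab : a ≤ b) : IntervalIntegrable (f1 lam p) volume a b := by
  rw [intervalIntegrable_iff_integrableOn_Ioc_of_le hab]
  exact (f1_integrableOn_Ioi hlam hp ha).mono_set Set.Ioc_subset_Ioi_self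

lemma G_hasDerivAt {lam p τ : ℝ} (hlam : 0 < lam) (hp : p ≤ 1) (hτ : 0 < τ) :
    HasDerivAt (G lam p) (-(f1 lam p τ)) τ := by
  have hc : 0 < τ / 2 := by linarith
  have hcτ : τ / 2 < τ := by linarith
  have hint : IntegrableOn (f1 lam p) (Set.Ioi (τ / 2)) := f1_integrableOn_Ioi hlam hp hc
  have key : ∀ x ∈ Set.Ioi (τ / 2), G lam p x = G lam p (τ / 2) - ∫ s in (τ / 2)..x, f1 lam p s := by
    intro x hx
    have h := integral_Ioi_split (le_of_lt hx) hint
    simp only [G] at *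
    linarith
  have hD : HasDerivAt (fun x => G lam p (τ / 2) - ∫ s in (τ / 2)..x, f1 lam p s)
      (-(f1 lam p τ)) τ := by
    exact (intervalIntegral.integral_hasDerivAt_right
      (f1_intervalIntegrable hlam hp hc hcτ.le)
      (f1_contOn.stronglyMeasurableAtFilter isOpen_Ioi τ hτ)
      (f1_contAt hτ.ne')).const_sub (G lam p (τ / 2))
  refine HasDerivAt.congr_of_eventuallyEq hD ?_
  filter_upwards [Ioi_mem_nhds hcτ] with x hx
  exact key x hx

lemma G_tendsto_zero {lam p : ℝ} (hlam : 0 < lam) (hp : p ≤ 1) :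
    Tendsto (G lam p) atTop (𝓝 0) := by
  have hint : IntegrableOn (f1 lam p) (Set.Ioi 1) := f1_integrableOn_Ioi hlam hp one_pos
  have h := intervalIntegral_tendsto_integral_Ioi 1 hint tendsto_id
  have hev : ∀ᶠ b in atTop, G lam p 1 - ∫ s in (1:ℝ)..b, f1 lam p s = G lam p b := by
    filter_upwards [eventually_ge_atTop (1:ℝ)] with b hb
    have := integral_Ioi_split hb hint
    simp only [G] at *
    linarith
  have h2 := (tendsto_const_nhds : Tendsto _ atTop (𝓝 (G lam p 1))).sub h
  rw [show G lam p 1 - ∫ s in Set.Ioi 1, f1 lam p s = 0 by simp [G]] at h2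
  exact h2.congr' hev

lemma G_continuousOn {lam p t : ℝ} (hlam : 0 < lam) (hp0 : 0 < p) (hp1 : p ≤ 1) :
    ContinuousOn (G lam p) (Set.Icc 0 t) := by
  have hint0 : IntegrableOn (f1 lam p) (Set.Ioi 0) := f1_integrableOn_Ioi_zero hlam hp0
  have key : ∀ x ∈ Set.Icc (0:ℝ) t, G lam p 0 - (∫ s in (0:ℝ)..x, f1 lam p s) = G lam p x := by
    intro x hx
    have h := integral_Ioi_split hx.1 hint0
    simp only [G] at *
    linarith
  refine ContinuousOn.congr ?_ fun x hx => (key x hx).symm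
  refine continuousOn_const.sub ?_
  rcases le_or_gt 0 t with h0t | h0t
  · have := intervalIntegral.continuousOn_primitive_interval (a := 0) (b := t)
      (μ := volume) (f := f1 lam p) ?_
    · rwa [Set.uIcc_of_le h0t] at this
    · rw [Set.uIcc_of_le h0t]
      rw [integrableOn_Icc_iff_integrableOn_Ioc]
      exact hint0.mono_set Set.Ioc_subset_Ioi_self
  · rw [Set.Icc_eq_empty (by linarith)]
    exact continuousOn_empty _

lemma key_identity {lam p τ : ℝ} (hlam : 0 < lam) (hp0 : 0 < p) (hp1 : p ≤ 1) (hτ : 0 < τ) :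
    (p - 1) * G lam (p - 1) τ
      = -(Real.exp (-(lam * τ)) * τ ^ (p - 1)) + lam * G lam p τ := by
  set D : ℝ → ℝ := fun x =>
    (p - 1) * G lam (p - 1) x + Real.exp (-(lam * x)) * x ^ (p - 1) - lam * G lam p x with hDdef
  have hderiv : ∀ x, 0 < x → HasDerivAt D 0 x := by
    intro x hx
    have h1 := (G_hasDerivAt hlam (by linarith : p - 1 ≤ 1) hx).const_mul (p - 1)
    have h2 := (G_hasDerivAt hlam hp1 hx).const_mul lam
    have he : HasDerivAt (fun y : ℝ => Real.exp (-(lam * y))) (-lam * Real.exp (-(lam * x))) x := by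
      have h0 : HasDerivAt (fun y : ℝ => -(lam * y)) (-lam) x := by
        exact (((hasDerivAt_id x).const_mul lam).neg).congr_deriv (by simp)
      simpa [mul_comm] using h0.exp
    have hr : HasDerivAt (fun y : ℝ => y ^ (p - 1)) ((p - 1) * x ^ (p - 1 - 1)) x :=
      Real.hasDerivAt_rpow_const (Or.inl hx.ne')
    have h3 := he.mul hr
    have h4 := (h1.add h3).sub h2
    refine h4.congr_deriv ?_
    simp only [f1]
    rw [show p - 1 - 1 = p - 1 - 1 from rfl]
    ring_nf
  have hconst : ∀ b, τ ≤ b → D b = D τ := by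
    intro b hb
    have h0 : ∀ x ∈ Set.uIcc τ b, HasDerivAt D 0 x := by
      intro x hx
      rw [Set.uIcc_of_le hb] at hx
      exact hderiv x (lt_of_lt_of_le hτ hx.1)
    have := intervalIntegral.integral_eq_sub_of_hasDerivAt h0
      (intervalIntegrable_const (c := (0:ℝ)))
    simp only [intervalIntegral.integral_zero] at this
    linarith
  have hlim : Tendsto D atTop (𝓝 0) := by
    have t1 := (G_tendsto_zero (lam := lam) (p := p - 1) hlam (by linarith)).const_mul (p - 1)
    have t2 := (G_tendsto_zero (lam := lam) (p := p) hlam hp1).const_mul lam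
    have t3 : Tendsto (fun x : ℝ => Real.exp (-(lam * x)) * x ^ (p - 1)) atTop (𝓝 0) := by
      have := tendsto_rpow_mul_exp_neg_mul_atTop_nhds_zero (p - 1) lam hlam
      refine this.congr fun x => ?_
      rw [mul_comm, neg_mul]
    have := (t1.add t3).sub t2
    simpa using this
  have hDτ : D τ = 0 := by
    have h2 : Tendsto D atTop (𝓝 (D τ)) := by
      refine Tendsto.congr' ?_ (tendsto_const_nhds : Tendsto (fun _ => D τ) atTop (𝓝 (D τ)))
      filter_upwards [eventually_ge_atTop τ] with b hb
      exact (hconst b hb).symm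
    exact tendsto_nhds_unique h2 hlim
  simp only [hDdef] at hDτ
  linarith

lemma G_zero_eq {lam p : ℝ} (hlam : 0 < lam) (hp : 0 < p) :
    G lam p 0 = Real.Gamma p / lam ^ p := by
  have h := Real.integral_rpow_mul_exp_neg_mul_Ioi hp hlam
  have h2 : G lam p 0 = ∫ t : ℝ in Set.Ioi 0, t ^ (p - 1) * Real.exp (-(lam * t)) := by
    simp only [G, f1]
    exact setIntegral_congr_fun measurableSet_Ioi fun x _ => mul_comm _ _
  rw [h2, h, Real.div_rpow zero_le_one hlam.le, Real.one_rpow]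
  ring

lemma inner_eq {lam H τ : ℝ} (hτ : 0 < τ) :
    (∫ τ₁ in Set.Iio (0:ℝ), Real.exp (lam * (τ₁ + τ)) * |τ₁ - τ| ^ (2 * H - 2))
      = Real.exp (2 * lam * τ) * G lam (2 * H - 1) τ := by
  have step1 : ∀ τ₁ ∈ Set.Iio (0:ℝ),
      Real.exp (lam * (τ₁ + τ)) * |τ₁ - τ| ^ (2 * H - 2)
        = Real.exp (2 * lam * τ) * f1 lam (2 * H - 1) (τ - τ₁) := by
    intro τ₁ hτ₁
    have hτ₁0 : τ₁ < 0 := hτ₁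
    have habs : |τ₁ - τ| = τ - τ₁ := by
      rw [abs_of_neg (by linarith), neg_sub]
    rw [habs]
    simp only [f1]
    rw [show 2 * H - 1 - 1 = 2 * H - 2 from by ring, ← mul_assoc, ← Real.exp_add]
    congr 2
    ring
  rw [setIntegral_congr_fun measurableSet_Iio step1, integral_const_mul]
  congr 1
  have h1 : (∫ τ₁ in Set.Iio (0:ℝ), f1 lam (2 * H - 1) (τ - τ₁))
      = ∫ x in Set.Iic (0:ℝ), f1 lam (2 * H - 1) (τ - x) :=
    (integral_Iic_eq_integral_Iio).symm
  have h2 : (∫ x in Set.Iic (0:ℝ), f1 lam (2 * H - 1) (τ - x))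
      = ∫ y in Set.Ioi (-(0:ℝ)), f1 lam (2 * H - 1) (τ + y) := by
    rw [← integral_comp_neg_Iic (0:ℝ) (fun y => f1 lam (2 * H - 1) (τ + y))]
    exact setIntegral_congr_fun measurableSet_Iic fun x _ => by rw [← sub_eq_add_neg]
  have h3 : (∫ y in Set.Ioi (0:ℝ), f1 lam (2 * H - 1) (τ + y))
      = ∫ s in Set.Ioi τ, f1 lam (2 * H - 1) s := by
    have hemb : MeasurableEmbedding (fun y : ℝ => τ + y) :=
      (Homeomorph.addLeft τ).isClosedEmbedding.measurableEmbedding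
    have := hemb.setIntegral_map (μ := volume) (f1 lam (2 * H - 1)) (Set.Ioi τ)
    rw [map_add_left_eq_self volume τ] at this
    rw [show (fun y : ℝ => τ + y) ⁻¹' Set.Ioi τ = Set.Ioi 0 by ext x; simp] at this
    exact this.symm
  rw [h1, h2, neg_zero, h3]
  rfl

end FouCovAux

/-- For `λ > 0`, `H ∈ (0,1/2)`, `θ > 0` and `t ≥ 0`:
`θ² H(2H-1) e^{-λt} ∫₀^t ∫_{-∞}^0 e^{λ(τ₁+τ₂)} |τ₁-τ₂|^{2H-2} dτ₁ dτ₂`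
`+ θ² e^{-λt} Γ(2H+1)/(2λ^{2H})`
`= θ² cosh(λt) Γ(2H+1)/(2λ^{2H}) - H θ² ∫₀^t cosh(λ(t-u)) u^{2H-1} du`. -/
theorem fou_cov_formula (lam H θ t : ℝ) (hlam : 0 < lam)
    (hH : H ∈ Set.Ioo (0 : ℝ) (1 / 2)) (hθ : 0 < θ) (ht : 0 ≤ t) :
    θ ^ 2 * (H * (2 * H - 1)) * Real.exp (-lam * t) *
        (∫ τ₂ in (0 : ℝ)..t, ∫ τ₁ in Set.Iio (0 : ℝ),
          Real.exp (lam * (τ₁ + τ₂)) * |τ₁ - τ₂| ^ (2 * H - 2)) +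
      θ ^ 2 * Real.exp (-lam * t) * Real.Gamma (2 * H + 1) / (2 * lam ^ (2 * H)) =
    θ ^ 2 * Real.cosh (lam * t) * Real.Gamma (2 * H + 1) / (2 * lam ^ (2 * H)) -
      H * θ ^ 2 * ∫ u in (0 : ℝ)..t, Real.cosh (lam * (t - u)) * u ^ (2 * H - 1) := by
  obtain ⟨hH0, hH2⟩ := hH
  have h2H0 : 0 < 2 * H := by linarith
  have h2H1 : 2 * H ≤ 1 := by linarith
  simp only [neg_mul]
  -- abbreviations (not `set`, to keep terms syntactic)
  have hexp1 : Real.exp (-(lam * t)) * Real.exp (2 * lam * t) = Real.exp (lam * t) := by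
    rw [← Real.exp_add]; congr 1; ring
  have hexp2 : ∀ x : ℝ, Real.exp (2 * lam * x) * Real.exp (-(lam * x)) = Real.exp (lam * x) := by
    intro x; rw [← Real.exp_add]; congr 1; ring
  -- interval integrabilities
  have iA : IntervalIntegrable (fun u => Real.exp (lam * u) * u ^ (2 * H - 1)) volume 0 t :=
    (intervalIntegral.intervalIntegrable_rpow' (by linarith)).continuousOn_mul
      (Real.continuous_exp.comp (continuous_const.mul continuous_id)).continuousOn
  have iA' : IntervalIntegrable (fun u => Real.exp (-(lam * u)) * u ^ (2 * H - 1)) volume 0 t :=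
    (intervalIntegral.intervalIntegrable_rpow' (by linarith)).continuousOn_mul
      (Real.continuous_exp.comp (continuous_const.mul continuous_id).neg).continuousOn
  have hGcont : ContinuousOn (FouCovAux.G lam (2 * H)) (Set.Icc 0 t) :=
    FouCovAux.G_continuousOn hlam h2H0 h2H1
  have iK : IntervalIntegrable (fun τ => Real.exp (2 * lam * τ) * FouCovAux.G lam (2 * H) τ)
      volume 0 t := by
    apply ContinuousOn.intervalIntegrable
    rw [Set.uIcc_of_le ht]
    exact ((Real.continuous_exp.comp (continuous_const.mul continuous_id)).continuousOn).mul hGcont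
  have hint0 : IntegrableOn (FouCovAux.f1 lam (2 * H)) (Set.Ioi 0) :=
    FouCovAux.f1_integrableOn_Ioi_zero hlam h2H0
  -- tail integral
  have hItail : (∫ u in (0:ℝ)..t, Real.exp (-(lam * u)) * u ^ (2 * H - 1))
      = FouCovAux.G lam (2 * H) 0 - FouCovAux.G lam (2 * H) t := by
    have h := FouCovAux.integral_Ioi_split ht hint0
    simp only [FouCovAux.G, FouCovAux.f1] at h ⊢
    linarith
  -- rewrite the inner integral
  have hInner : (∫ τ₂ in (0 : ℝ)..t, ∫ τ₁ in Set.Iio (0 : ℝ),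
        Real.exp (lam * (τ₁ + τ₂)) * |τ₁ - τ₂| ^ (2 * H - 2))
      = ∫ τ in (0:ℝ)..t, Real.exp (2 * lam * τ) * FouCovAux.G lam (2 * H - 1) τ := by
    apply intervalIntegral.integral_congr_ae
    refine Filter.Eventually.of_forall fun τ hτ => ?_
    rw [Set.uIoc_of_le ht] at hτ
    exact FouCovAux.inner_eq hτ.1
  -- value of K
  have hKval : 2 * lam * (∫ τ in (0:ℝ)..t, Real.exp (2 * lam * τ) * FouCovAux.G lam (2 * H) τ)
      = Real.exp (2 * lam * t) * FouCovAux.G lam (2 * H) t - FouCovAux.G lam (2 * H) 0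
        + ∫ u in (0:ℝ)..t, Real.exp (lam * u) * u ^ (2 * H - 1) := by
    have hPcont : ContinuousOn
        (fun τ => Real.exp (2 * lam * τ) * FouCovAux.G lam (2 * H) τ / (2 * lam))
        (Set.Icc 0 t) :=
      (((Real.continuous_exp.comp (continuous_const.mul continuous_id)).continuousOn).mul
        hGcont).div_const _
    have hPderiv : ∀ x ∈ Set.Ioo 0 t,
        HasDerivAt (fun τ => Real.exp (2 * lam * τ) * FouCovAux.G lam (2 * H) τ / (2 * lam))
          (Real.exp (2 * lam * x) * FouCovAux.G lam (2 * H) x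
            - Real.exp (lam * x) * x ^ (2 * H - 1) / (2 * lam)) x := by
      intro x hx
      have hex : HasDerivAt (fun y : ℝ => Real.exp (2 * lam * y))
          (2 * lam * Real.exp (2 * lam * x)) x := by
        simpa [mul_comm] using ((hasDerivAt_id x).const_mul (2 * lam)).exp
      have hd := (hex.mul (FouCovAux.G_hasDerivAt hlam h2H1 hx.1)).div_const (2 * lam)
      refine hd.congr_deriv ?_
      simp only [FouCovAux.f1]
      rw [mul_neg, ← mul_assoc, hexp2 x]
      field_simp
      ring
    have hPint : IntervalIntegrable
        (fun x => Real.exp (2 * lam * x) * FouCovAux.G lam (2 * H) x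
          - Real.exp (lam * x) * x ^ (2 * H - 1) / (2 * lam)) volume 0 t :=
      iK.sub (iA.div_const _)
    have hFTC := intervalIntegral.integral_eq_sub_of_hasDerivAt_of_le ht hPcont hPderiv hPint
    rw [intervalIntegral.integral_sub iK (iA.div_const _), intervalIntegral.integral_div] at hFTC
    have h0 : Real.exp (2 * lam * 0) * FouCovAux.G lam (2 * H) 0 / (2 * lam)
        = FouCovAux.G lam (2 * H) 0 / (2 * lam) := by
      norm_num
    rw [h0] at hFTC
    have hl : (2 * lam) ≠ 0 := by positivity
    field_simp at hFTC
    linear_combination hFTC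
  -- value of (2H-1) * J
  have hJ2 : (2 * H - 1) * (∫ τ in (0:ℝ)..t, Real.exp (2 * lam * τ)
        * FouCovAux.G lam (2 * H - 1) τ)
      = (Real.exp (2 * lam * t) * FouCovAux.G lam (2 * H) t - FouCovAux.G lam (2 * H) 0
          - ∫ u in (0:ℝ)..t, Real.exp (lam * u) * u ^ (2 * H - 1)) / 2 := by
    have hcongr : (∫ τ in (0:ℝ)..t, (2 * H - 1) * (Real.exp (2 * lam * τ)
          * FouCovAux.G lam (2 * H - 1) τ))
        = ∫ τ in (0:ℝ)..t, (lam * (Real.exp (2 * lam * τ) * FouCovAux.G lam (2 * H) τ)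
          - Real.exp (lam * τ) * τ ^ (2 * H - 1)) := by
      apply intervalIntegral.integral_congr_ae
      refine Filter.Eventually.of_forall fun τ hτ => ?_
      rw [Set.uIoc_of_le ht] at hτ
      have hkey := FouCovAux.key_identity hlam h2H0 h2H1 hτ.1
      linear_combination Real.exp (2 * lam * τ) * hkey - τ ^ (2 * H - 1) * hexp2 τ
    rw [← intervalIntegral.integral_const_mul, hcongr,
      intervalIntegral.integral_sub (iK.const_mul lam) iA,
      intervalIntegral.integral_const_mul]
    linear_combination hKval / 2
  -- Gamma value
  have hlampow : (0:ℝ) < lam ^ (2 * H) := Real.rpow_pos_of_pos hlam _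
  have hGam : Real.Gamma (2 * H + 1) = 2 * H * (FouCovAux.G lam (2 * H) 0 * lam ^ (2 * H)) := by
    rw [Real.Gamma_add_one (ne_of_gt h2H0), FouCovAux.G_zero_eq hlam h2H0]
    field_simp
  have hdiv : ∀ c : ℝ, c * Real.Gamma (2 * H + 1) / (2 * lam ^ (2 * H))
      = c * (H * FouCovAux.G lam (2 * H) 0) := by
    intro c
    rw [hGam]
    field_simp
  -- cosh integral
  have hcosh : (∫ u in (0:ℝ)..t, Real.cosh (lam * (t - u)) * u ^ (2 * H - 1))
      = Real.exp (lam * t) / 2 * (FouCovAux.G lam (2 * H) 0 - FouCovAux.G lam (2 * H) t)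
        + Real.exp (-(lam * t)) / 2
          * ∫ u in (0:ℝ)..t, Real.exp (lam * u) * u ^ (2 * H - 1) := by
    have hpt : ∀ u : ℝ, Real.cosh (lam * (t - u)) * u ^ (2 * H - 1)
        = Real.exp (lam * t) / 2 * (Real.exp (-(lam * u)) * u ^ (2 * H - 1))
          + Real.exp (-(lam * t)) / 2 * (Real.exp (lam * u) * u ^ (2 * H - 1)) := by
      intro u
      rw [Real.cosh_eq, show lam * (t - u) = lam * t + -(lam * u) by ring, Real.exp_add,
        show -(lam * t + -(lam * u)) = -(lam * t) + lam * u by ring, Real.exp_add]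
      ring
    rw [intervalIntegral.integral_congr fun u _ => hpt u,
      intervalIntegral.integral_add (iA'.const_mul _) (iA.const_mul _),
      intervalIntegral.integral_const_mul, intervalIntegral.integral_const_mul, hItail]
  rw [hInner, hdiv, hdiv, hcosh, Real.cosh_eq]
  linear_combination (θ ^ 2 * H * Real.exp (-(lam * t))) * hJ2
    + (θ ^ 2 * H * FouCovAux.G lam (2 * H) t / 2) * hexp1
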